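/- Let p be a prime with p ≠ 2, let k be a field of characteristic p, and let f = x₀x₁² − x₂² in k[x₀,…,xₙ] (n ≥ 2). Then f^{p−1} does not lie in the ideal (x₀^p, x₁^p, …, xₙ^p). -/

import Mathlib

open MvPolynomial

/-- Fedder's criterion for the pinch point `x₀x₁² = x₂²` in odd characteristic:
`(x₀x₁² − x₂²)^{p−1} ∉ (x₀^p, …, xₙ^p)`. -/
theorem pinch_point_fedder
    (p : ℕ) (hp : p.Prime) (hp2 : p ≠ 2)
    (k : Type*) [Field k] [CharP k p]
    (n : ℕ) (hn : 2 ≤ n) :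
    (X 0 * X 1 ^ 2 - X 2 ^ 2 : MvPolynomial (Fin (n + 1)) k) ^ (p - 1) ∉
      Ideal.span (Set.range fun i : Fin (n + 1) => (X i : MvPolynomial (Fin (n + 1)) k) ^ p) := by
  obtain ⟨m, rfl⟩ : ∃ m, n = m + 2 := ⟨n - 2, by omega⟩
  have hodd : Odd p := hp.odd_of_ne_two hp2
  obtain ⟨a, ha⟩ : ∃ a, p = 2 * a + 1 := by obtain ⟨a, ha⟩ := hodd; exact ⟨a, by omega⟩
  have hp1 : p - 1 = 2 * a := by omega
  have ha1 : 1 ≤ a := by have := hp.two_le; omega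
  have h01 : (0 : Fin (m + 3)) ≠ 1 := by simp [Fin.ext_iff]
  have h02 : (0 : Fin (m + 3)) ≠ 2 := by simp [Fin.ext_iff, Nat.mod_eq_of_lt (by omega : 2 < m + 3)]
  have h12 : (1 : Fin (m + 3)) ≠ 2 := by simp [Fin.ext_iff, Nat.mod_eq_of_lt (by omega : 2 < m + 3)]
  -- rewrite generators as monomials
  have hgen : (Set.range fun i : Fin (m + 3) => (X i : MvPolynomial (Fin (m + 3)) k) ^ p)
      = (fun s => monomial s (1 : k)) '' (Set.range fun i : Fin (m + 3) => Finsupp.single i p) := by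
    rw [← Set.range_comp]
    refine congrArg _ (funext fun i => ?_)
    simp [Function.comp, X_pow_eq_monomial]
  rw [hgen, mem_ideal_span_monomial_image]
  push_neg
  set m0 : Fin (m + 3) →₀ ℕ :=
    Finsupp.single 0 a + Finsupp.single 1 (2 * a) + Finsupp.single 2 (2 * a) with hm0
  refine ⟨m0, ?_, ?_⟩
  · -- m0 is in the support
    rw [mem_support_iff]
    have hsub : (X 0 * X 1 ^ 2 - X 2 ^ 2 : MvPolynomial (Fin (m + 3)) k)
        = monomial (Finsupp.single 0 1 + Finsupp.single 1 2) 1 + monomial (Finsupp.single 2 2) (-1) := by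
      rw [X_pow_eq_monomial, X_pow_eq_monomial, X]
      rw [monomial_mul, sub_eq_add_neg]
      simp
    rw [hsub, hp1, add_pow]
    rw [coeff_sum]
    have key : ∀ j ∈ Finset.range (2 * a + 1),
        coeff m0 ((monomial (Finsupp.single 0 1 + Finsupp.single 1 2) (1:k)) ^ j *
          (monomial (Finsupp.single 2 2) (-1:k)) ^ (2 * a - j) * ((2*a).choose j : MvPolynomial (Fin (m+3)) k))
        = if j = a then ((2*a).choose a : k) * (-1 : k) ^ a else 0 := by
      intro j _
      rw [monomial_pow, monomial_pow, monomial_mul, one_pow, one_mul]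
      rw [← map_natCast (C : k →+* MvPolynomial (Fin (m+3)) k), mul_comm, coeff_C_mul,
        coeff_monomial, mul_ite, mul_zero]
      have hexp : j • (Finsupp.single (0 : Fin (m+3)) 1 + Finsupp.single 1 2) + (2*a - j) • Finsupp.single 2 2
          = Finsupp.single 0 j + Finsupp.single 1 (2*j) + Finsupp.single 2 (2*(2*a-j)) := by
        rw [smul_add]
        simp [Finsupp.smul_single, add_assoc, mul_comm]
      rw [hexp]
      by_cases hj : j = a
      · rw [hj]
        have h2a : 2 * a - a = a := by omega
        rw [h2a, if_pos hm0.symm, if_pos rfl]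
      · rw [if_neg, if_neg hj]
        intro heq
        have := DFunLike.congr_fun heq 0
        simp [hm0, Finsupp.single_apply, h01, h02, h01.symm, h02.symm] at this
        exact hj this
    rw [Finset.sum_congr rfl key, Finset.sum_ite_eq' (Finset.range (2*a+1)) a]
    rw [if_pos (by simp; omega)]
    have hC : ((2*a).choose a : k) ≠ 0 := by
      rw [Ne, CharP.cast_eq_zero_iff k p]
      intro hdvd
      have h2 : p ∣ Nat.factorial (2*a) := by
        rw [← Nat.choose_mul_factorial_mul_factorial (by omega : a ≤ 2*a)]
        exact (hdvd.mul_right _).mul_right _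
      have := (Nat.Prime.dvd_factorial hp).mp h2
      omega
    exact mul_ne_zero hC (pow_ne_zero _ (neg_ne_zero.mpr one_ne_zero))
  · rintro s ⟨i, rfl⟩ hle
    have hle' := hle i
    rw [Finsupp.single_eq_same] at hle'
    have : m0 i ≤ 2 * a := by
      simp only [hm0, Finsupp.add_apply, Finsupp.single_apply]
      split_ifs <;> omega
    omega
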